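/- Let τ : ℝ → ℝ be a multiplicative bijection, i.e., a bijection satisfying τ(xy) = τ(x)τ(y) for all x,y ∈ ℝ. Then: (a) for all x ∈ ℝ, x ≥ 0 if and only if τ(x) ≥ 0; (b) τ(−x) = −τ(x) for all x ∈ ℝ; (c) the following are equivalent: (1) τ is continuous; (2) τ is continuous at 0; (3) for all x with 0 < x < 1 one has 0 < τ(x) < 1; (4) τ is increasing; (5) there exists p > 0 such that τ(x) = sgn(x)·|x|^p for all x ∈ ℝ. -/

import Mathlib

open Set Topology

/-- Classification of multiplicative bijections of `ℝ`: such a bijection preserves signs,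
is odd, and continuity is equivalent to continuity at `0`, to preserving `(0,1)`, to being
increasing, and to having the form `τ(x) = sgn(x)·|x|^p` for some `p > 0`. -/
theorem stmt_10 (τ : ℝ → ℝ) (hbij : Function.Bijective τ)
    (hmul : ∀ x y : ℝ, τ (x * y) = τ x * τ y) :
    (∀ x : ℝ, 0 ≤ x ↔ 0 ≤ τ x) ∧
    (∀ x : ℝ, τ (-x) = -τ x) ∧
    [Continuous τ,
     ContinuousAt τ 0,
     ∀ x : ℝ, 0 < x → x < 1 → 0 < τ x ∧ τ x < 1,
     StrictMono τ,
     ∃ p : ℝ, 0 < p ∧ ∀ x : ℝ, τ x = Real.sign x * |x| ^ p].TFAE := by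
  have hinj := hbij.1
  have h0 : τ 0 = 0 := by
    have hsq : τ 0 * τ 0 = τ 0 := by
      have := hmul 0 0; rw [mul_zero] at this; linarith
    have hfac : τ 0 * (τ 0 - 1) = 0 := by ring_nf; linarith
    rcases mul_eq_zero.mp hfac with h | h
    · exact h
    · exfalso
      have h' : τ 0 = 1 := by linarith
      have hx : ∀ x : ℝ, τ x = 1 := by
        intro x
        have := hmul 0 x
        rw [zero_mul, h'] at this
        linarith
      have := hinj ((hx 0).trans (hx 1).symm)
      norm_num at this
  have h1 : τ 1 = 1 := by
    have hsq : τ 1 * τ 1 = τ 1 := by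
      have := hmul 1 1; rw [mul_one] at this; linarith
    have hfac : τ 1 * (τ 1 - 1) = 0 := by ring_nf; linarith
    rcases mul_eq_zero.mp hfac with h | h
    · exfalso
      have := hinj (h.trans h0.symm)
      norm_num at this
    · linarith
  have hne0 : ∀ x : ℝ, x ≠ 0 → τ x ≠ 0 := fun x hx h => hx (hinj (h.trans h0.symm))
  have hpos : ∀ x : ℝ, 0 < x → 0 < τ x := by
    intro x hx
    have hx' : τ x = τ (Real.sqrt x) * τ (Real.sqrt x) := by
      rw [← hmul, Real.mul_self_sqrt hx.le]
    have hnn : 0 ≤ τ x := hx' ▸ mul_self_nonneg _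
    exact lt_of_le_of_ne hnn (Ne.symm (hne0 x hx.ne'))
  have hodd : ∀ x : ℝ, τ (-x) = -τ x := by
    have hm1 : τ (-1) = -1 := by
      have hsq : τ (-1) * τ (-1) = 1 := by
        have := hmul (-1) (-1)
        rw [show ((-1 : ℝ) * -1) = 1 by ring, h1] at this
        linarith
      rcases mul_self_eq_one_iff.mp hsq with h | h
      · exfalso
        have := hinj (h.trans h1.symm)
        norm_num at this
      · exact h
    intro x
    have := hmul (-1) x
    rw [hm1, show ((-1 : ℝ) * x) = -x by ring] at this
    linarith
  have parta : ∀ x : ℝ, 0 ≤ x ↔ 0 ≤ τ x := by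
    intro x
    constructor
    · intro hx
      rcases hx.eq_or_lt with h | h
      · rw [← h, h0]
      · exact (hpos x h).le
    · intro hx
      by_contra h
      push_neg at h
      have h2 : 0 < τ (-x) := hpos _ (by linarith)
      rw [hodd] at h2
      linarith
  refine ⟨parta, hodd, ?_⟩
  have hsm_aux : (∀ a b : ℝ, 0 < a → a < b → τ a < τ b) → StrictMono τ := by
    intro hmono x y hxy
    rcases lt_trichotomy x 0 with hx | rfl | hx
    · rcases lt_trichotomy y 0 with hy | rfl | hy
      · have hlt := hmono (-y) (-x) (by linarith) (by linarith)
        rw [hodd y, hodd x] at hlt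
        linarith
      · rw [h0]
        have h2 := hpos (-x) (by linarith)
        rw [hodd] at h2
        linarith
      · have h2 := hpos (-x) (by linarith)
        rw [hodd] at h2
        have h3 := hpos y hy
        linarith
    · rw [h0]; exact hpos y hxy
    · exact hmono x y hx hxy
  tfae_have 1 → 2 := fun h => h.continuousAt
  tfae_have 2 → 3 := by
    intro hc x hx hx1
    refine ⟨hpos x hx, ?_⟩
    by_contra h
    push_neg at h
    have hpow : ∀ n : ℕ, τ (x ^ n) = (τ x) ^ n := by
      intro n
      induction n with
      | zero => simpa using h1
      | succ n ih => rw [pow_succ, hmul, ih, pow_succ]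
    have hlim : Filter.Tendsto (fun n : ℕ => x ^ n) Filter.atTop (nhds 0) :=
      tendsto_pow_atTop_nhds_zero_of_lt_one hx.le hx1
    have hlim2 : Filter.Tendsto (fun n : ℕ => τ (x ^ n)) Filter.atTop (nhds 0) := by
      have := hc.tendsto.comp hlim
      rwa [h0] at this
    have hge : (1 : ℝ) ≤ 0 := by
      apply ge_of_tendsto hlim2
      filter_upwards with n
      rw [hpow]
      exact one_le_pow₀ h
    linarith
  tfae_have 3 → 4 := by
    intro h3
    apply hsm_aux
    intro a b ha hab
    have hb : 0 < b := ha.trans hab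
    have hq := h3 (a / b) (div_pos ha hb) ((div_lt_one hb).mpr hab)
    have hab' : τ a = τ (a / b) * τ b := by rw [← hmul, div_mul_cancel₀ _ hb.ne']
    rw [hab']
    calc τ (a / b) * τ b < 1 * τ b := mul_lt_mul_of_pos_right hq.2 (hpos b hb)
      _ = τ b := one_mul _
  tfae_have 4 → 1 := fun hm => hm.monotone.continuous_of_surjective hbij.2
  tfae_have 4 → 5 := by
    intro hm
    have hcont : Continuous τ := hm.monotone.continuous_of_surjective hbij.2
    set F : ℝ →+ ℝ :=
      { toFun := fun t => Real.log (τ (Real.exp t))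
        map_zero' := by simp [Real.exp_zero, h1]
        map_add' := by
          intro s t
          rw [Real.exp_add, hmul,
            Real.log_mul (hne0 _ (Real.exp_pos s).ne') (hne0 _ (Real.exp_pos t).ne')] }
      with hFdef
    have hFc : Continuous F :=
      (hcont.comp Real.continuous_exp).log fun t => hne0 _ (Real.exp_pos t).ne'
    have hF : ∀ t : ℝ, F t = t * F 1 := by
      intro t
      have h := (F.toRealLinearMap hFc).map_smul t (1 : ℝ)
      simpa [AddMonoidHom.coe_toRealLinearMap, smul_eq_mul] using h
    have hF1 : F 1 = Real.log (τ (Real.exp 1)) := rfl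
    have hp : 0 < F 1 := by
      rw [hF1]
      apply Real.log_pos
      have h1e : (1 : ℝ) < Real.exp 1 := Real.one_lt_exp_iff.mpr one_pos
      have := hm h1e
      rwa [h1] at this
    refine ⟨F 1, hp, ?_⟩
    have hposval : ∀ x : ℝ, 0 < x → τ x = x ^ (F 1) := by
      intro x hx
      have hexp : Real.exp (F (Real.log x)) = τ x := by
        show Real.exp (Real.log (τ (Real.exp (Real.log x)))) = τ x
        rw [Real.exp_log hx, Real.exp_log (hpos x hx)]
      rw [← hexp, hF, Real.rpow_def_of_pos hx]
    intro x
    rcases lt_trichotomy x 0 with hx | rfl | hx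
    · rw [show τ x = -τ (-x) from by have := hodd x; linarith,
        hposval (-x) (by linarith), Real.sign_of_neg hx, abs_of_neg hx]
      ring
    · rw [h0, Real.sign_zero, zero_mul]
    · rw [hposval x hx, Real.sign_of_pos hx, abs_of_pos hx, one_mul]
  tfae_have 5 → 4 := by
    rintro ⟨p, hp, hform⟩
    apply hsm_aux
    intro a b ha hab
    have hb : 0 < b := ha.trans hab
    rw [hform a, hform b, Real.sign_of_pos ha, Real.sign_of_pos hb,
      abs_of_pos ha, abs_of_pos hb, one_mul, one_mul]
    exact Real.rpow_lt_rpow ha.le hab hp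
  tfae_finish
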